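/- There exists ε₀ > 0 such that for every ε ∈ (0, ε₀), every natural number a, integers b and h with h ≠ 0, and every natural number H sufficiently large depending on ε, a, h, the following holds. Let 𝒫_H be the set of primes p with ε²H/2 < p ≤ ε²H and P_H := ∏_{p ∈ 𝒫_H} p; let (c_p)_{p ∈ 𝒫_H} be complex numbers with |c_p| = 1; let x_{1,j}, x_{2,j} (1 ≤ j ≤ H) be complex numbers of modulus at most 1; and for y ∈ ℤ/P_Hℤ define F(y) := ∑_{p ∈ 𝒫_H} c_p ∑_{j : j, j+ph ∈ [1,H]} 1_{ay + j ≡ pb (mod ap)} · x_{1,j} · x_{2,j+ph}. Then the number of y ∈ ℤ/P_Hℤ with |F(y) − (1/P_H) ∑_{y' ∈ ℤ/P_Hℤ} F(y')| ≥ ε² H/log H is at most exp(−ε⁷ H/log H) · P_H. -/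

import Mathlib

open Finset

open scoped Classical in
/-- The set `𝒫_H` of primes `p` with `ε²H/2 < p ≤ ε²H`. -/
noncomputable def mediumPrimes (ε : ℝ) (H : ℕ) : Finset ℕ :=
  (Finset.range (H + 1)).filter
    (fun p => p.Prime ∧ ε ^ 2 * H / 2 < (p : ℝ) ∧ (p : ℝ) ≤ ε ^ 2 * H)

/-- `P_H`, the product of the primes in `𝒫_H`. -/
noncomputable def mediumPrimesProd (ε : ℝ) (H : ℕ) : ℕ :=
  ∏ p ∈ mediumPrimes ε H, p

/-- The bilinear form
`F(y) = ∑_{p ∈ 𝒫_H} c_p ∑_{j : j, j+ph ∈ [1,H]} 1_{ay+j ≡ pb (mod ap)} x_{1,j} x_{2,j+ph}`,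
with `y` a representative of a residue class in `ℤ/P_Hℤ`. -/
noncomputable def bilinearForm (ε : ℝ) (H a : ℕ) (b h : ℤ) (c : ℕ → ℂ)
    (x₁ x₂ : ℤ → ℂ) (y : ℕ) : ℂ :=
  ∑ p ∈ mediumPrimes ε H, c p *
    ∑ j ∈ (Finset.Icc (1 : ℤ) (H : ℤ)).filter
        (fun j => 1 ≤ j + (p : ℤ) * h ∧ j + (p : ℤ) * h ≤ (H : ℤ)),
      (if ((a : ℤ) * (y : ℤ) + j) % ((a : ℤ) * (p : ℤ)) =
          ((p : ℤ) * b) % ((a : ℤ) * (p : ℤ)) then (1 : ℂ) else 0) * x₁ j * x₂ (j + (p : ℤ) * h)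

/-! ### Auxiliary machinery -/

lemma crt_sum_two {β : Type*} [AddCommMonoid β] (q P : ℕ) (hq : q ≠ 0) (hP : P ≠ 0)
    (co : Nat.Coprime q P) (f : ℕ → ℕ → β) :
    ∑ y ∈ range (q * P), f (y % q) (y % P) = ∑ u ∈ range q, ∑ v ∈ range P, f u v := by
  rw [← Finset.sum_product']
  refine Finset.sum_nbij' (fun y => (y % q, y % P))
    (fun uv => (Nat.chineseRemainder co uv.1 uv.2 : ℕ)) ?_ ?_ ?_ ?_ ?_
  · intro y hy
    simp only [mem_range] at hy
    simp only [Finset.mem_product, mem_range]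
    have hq' : 0 < q := Nat.pos_of_ne_zero hq
    have hP' : 0 < P := Nat.pos_of_ne_zero hP
    exact ⟨Nat.mod_lt _ hq', Nat.mod_lt _ hP'⟩
  · intro uv huv
    simp only [mem_range]
    exact Nat.chineseRemainder_lt_mul co uv.1 uv.2 hq hP
  · intro y hy
    simp only [mem_range] at hy
    have h1 : (Nat.chineseRemainder co (y % q) (y % P) : ℕ) ≡ y [MOD q * P] := by
      have := Nat.chineseRemainder_modEq_unique co
        (z := y) (Nat.mod_modEq y q).symm (Nat.mod_modEq y P).symm
      exact this.symm
    have h2 : (Nat.chineseRemainder co (y % q) (y % P) : ℕ) < q * P :=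
      Nat.chineseRemainder_lt_mul co _ _ hq hP
    have := h1
    unfold Nat.ModEq at this
    rwa [Nat.mod_eq_of_lt h2, Nat.mod_eq_of_lt hy] at this
  · intro uv huv
    simp only [Finset.mem_product, mem_range] at huv
    have h1 := (Nat.chineseRemainder co uv.1 uv.2).2.1
    have h2 := (Nat.chineseRemainder co uv.1 uv.2).2.2
    unfold Nat.ModEq at h1 h2
    exact Prod.ext (h1.trans (Nat.mod_eq_of_lt huv.1)) (h2.trans (Nat.mod_eq_of_lt huv.2))
  · intro y hy; rfl

lemma crt_sum_prod {β : Type*} [CommSemiring β] (S : Finset ℕ) (hS : ∀ p ∈ S, p.Prime)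
    (φ : ℕ → ℕ → β) :
    ∑ y ∈ range (∏ p ∈ S, p), ∏ p ∈ S, φ p (y % p)
      = ∏ p ∈ S, ∑ r ∈ range p, φ p r := by
  induction S using Finset.cons_induction with
  | empty => simp
  | cons q S hq ih =>
    have hqp : q.Prime := hS q (Finset.mem_cons_self _ _)
    have hSp : ∀ p ∈ S, p.Prime := fun p hp => hS p (Finset.mem_cons_of_mem hp)
    have hP : (∏ p ∈ S, p) ≠ 0 := by
      refine Finset.prod_ne_zero_iff.2 fun p hp => (hSp p hp).pos.ne'
    have co : Nat.Coprime q (∏ p ∈ S, p) := by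
      refine Nat.Coprime.prod_right fun p hp => ?_
      rw [Nat.coprime_primes hqp (hSp p hp)]
      exact fun h => hq (h ▸ hp)
    rw [Finset.prod_cons, Finset.prod_cons]
    simp only [Finset.prod_cons]
    have key : ∀ y : ℕ, ∏ p ∈ S, φ p (y % p) = ∏ p ∈ S, φ p ((y % ∏ p ∈ S, p) % p) := by
      intro y
      refine Finset.prod_congr rfl fun p hp => ?_
      rw [Nat.mod_mod_of_dvd _ (Finset.dvd_prod_of_mem _ hp)]
    calc ∑ y ∈ range (q * ∏ p ∈ S, p), φ q (y % q) * ∏ p ∈ S, φ p (y % p)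
        = ∑ y ∈ range (q * ∏ p ∈ S, p),
            φ q (y % q) * ∏ p ∈ S, φ p ((y % ∏ p ∈ S, p) % p) := by
          exact Finset.sum_congr rfl fun y _ => by rw [key y]
      _ = ∑ u ∈ range q, ∑ v ∈ range (∏ p ∈ S, p), φ q u * ∏ p ∈ S, φ p (v % p) :=
          crt_sum_two q _ hqp.pos.ne' hP co (fun u v => φ q u * ∏ p ∈ S, φ p (v % p))
      _ = (∑ r ∈ range q, φ q r) * ∏ p ∈ S, ∑ r ∈ range p, φ p r := by
          rw [← ih hSp, ← Finset.sum_mul_sum]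

lemma exp_le_cosh_add (l M x : ℝ) (hM : 0 < M) (hx : |x| ≤ M) :
    Real.exp (l * x) ≤ Real.cosh (l * M) + (x / M) * Real.sinh (l * M) := by
  have hx1 : -M ≤ x := (abs_le.1 hx).1
  have hx2 : x ≤ M := (abs_le.1 hx).2
  set t : ℝ := (x + M) / (2 * M) with ht
  have ht0 : 0 ≤ t := by
    apply div_nonneg <;> nlinarith
  have ht1 : t ≤ 1 := by
    rw [div_le_one (by nlinarith)]; nlinarith
  have hconv := convexOn_exp.2 (Set.mem_univ (l * M)) (Set.mem_univ (-(l * M)))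
    ht0 (show (0:ℝ) ≤ 1 - t by linarith) (show t + (1 - t) = 1 by ring)
  have ht2 : t * (2 * M) = x + M := by rw [ht]; exact div_mul_cancel₀ _ (by positivity)
  have harg : t * (l * M) + (1 - t) * (-(l * M)) = l * x := by
    linear_combination l * ht2
  rw [smul_eq_mul, smul_eq_mul, harg] at hconv
  refine hconv.trans (le_of_eq ?_)
  rw [Real.cosh_eq, Real.sinh_eq]
  field_simp [ht]
  linear_combination (Real.exp (l * M) - Real.exp (-(l * M))) * ht2

lemma hoeffding_factor (p : ℕ) (g : ℕ → ℝ) (M l : ℝ) (hM : 0 < M)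
    (hb : ∀ r ∈ range p, |g r| ≤ M) (h0 : ∑ r ∈ range p, g r = 0) :
    ∑ r ∈ range p, Real.exp (l * g r) ≤ p * Real.exp (l ^ 2 * M ^ 2 / 2) := by
  calc ∑ r ∈ range p, Real.exp (l * g r)
      ≤ ∑ r ∈ range p, (Real.cosh (l * M) + (g r / M) * Real.sinh (l * M)) :=
        Finset.sum_le_sum fun r hr => exp_le_cosh_add l M (g r) hM (hb r hr)
    _ = p * Real.cosh (l * M) := by
        rw [Finset.sum_add_distrib, Finset.sum_const, ← Finset.sum_mul, ← Finset.sum_div, h0]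
        simp
    _ ≤ p * Real.exp (l ^ 2 * M ^ 2 / 2) := by
        have := Real.cosh_le_exp_half_sq (l * M)
        have hc : ((l * M) ^ 2 / 2) = l ^ 2 * M ^ 2 / 2 := by ring
        rw [hc] at this
        exact mul_le_mul_of_nonneg_left this (Nat.cast_nonneg p)

/-- Chernoff-type counting bound for sums of functions of independent residues. -/
lemma chernoff_count (S : Finset ℕ) (hS : ∀ p ∈ S, p.Prime) (g : ℕ → ℕ → ℝ)
    (M N s : ℝ) (hM : 0 < M) (hN : 0 < N) (hs : 0 < s) (hn : (S.card : ℝ) ≤ N)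
    (hb : ∀ p ∈ S, ∀ r ∈ range p, |g p r| ≤ M)
    (h0 : ∀ p ∈ S, ∑ r ∈ range p, g p r = 0) :
    (((range (∏ p ∈ S, p)).filter (fun y => s ≤ ∑ p ∈ S, g p (y % p))).card : ℝ)
      ≤ (∏ p ∈ S, p : ℕ) * Real.exp (-(s ^ 2) / (2 * N * M ^ 2)) := by
  set l : ℝ := s / (N * M ^ 2) with hl
  have hl0 : 0 < l := by positivity
  obtain ⟨P, hP⟩ : ∃ P : ℕ, P = ∏ p ∈ S, p := ⟨_, rfl⟩
  rw [← hP]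
  -- Markov
  have markov : (((range P).filter (fun y => s ≤ ∑ p ∈ S, g p (y % p))).card : ℝ) * Real.exp (l * s)
      ≤ ∑ y ∈ range P, Real.exp (l * ∑ p ∈ S, g p (y % p)) := by
    calc (((range P).filter (fun y => s ≤ ∑ p ∈ S, g p (y % p))).card : ℝ) * Real.exp (l * s)
        = ∑ _y ∈ (range P).filter (fun y => s ≤ ∑ p ∈ S, g p (y % p)), Real.exp (l * s) := by
          rw [Finset.sum_const, nsmul_eq_mul]
      _ ≤ ∑ y ∈ (range P).filter (fun y => s ≤ ∑ p ∈ S, g p (y % p)),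
            Real.exp (l * ∑ p ∈ S, g p (y % p)) := by
          refine Finset.sum_le_sum fun y hy => ?_
          have := (Finset.mem_filter.1 hy).2
          exact Real.exp_le_exp.2 (by nlinarith)
      _ ≤ ∑ y ∈ range P, Real.exp (l * ∑ p ∈ S, g p (y % p)) := by
          refine Finset.sum_le_sum_of_subset_of_nonneg (Finset.filter_subset _ _)
            fun y _ _ => (Real.exp_pos _).le
  -- product bound
  have prodbd : ∑ y ∈ range P, Real.exp (l * ∑ p ∈ S, g p (y % p))
      ≤ (P : ℝ) * Real.exp (N * (l ^ 2 * M ^ 2 / 2)) := by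
    have expand : ∀ y : ℕ, Real.exp (l * ∑ p ∈ S, g p (y % p))
        = ∏ p ∈ S, Real.exp (l * g p (y % p)) := by
      intro y
      rw [Finset.mul_sum, Real.exp_sum]
    calc ∑ y ∈ range P, Real.exp (l * ∑ p ∈ S, g p (y % p))
        = ∑ y ∈ range P, ∏ p ∈ S, Real.exp (l * g p (y % p)) := by
          exact Finset.sum_congr rfl fun y _ => expand y
      _ = ∏ p ∈ S, ∑ r ∈ range p, Real.exp (l * g p r) := by
          rw [hP]; exact crt_sum_prod S hS (fun p r => Real.exp (l * g p r))
      _ ≤ ∏ p ∈ S, ((p : ℝ) * Real.exp (l ^ 2 * M ^ 2 / 2)) := by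
          refine Finset.prod_le_prod (fun p hp => Finset.sum_nonneg fun r _ => (Real.exp_pos _).le)
            (fun p hp => hoeffding_factor p (g p) M l hM (hb p hp) (h0 p hp))
      _ = (P : ℝ) * Real.exp (S.card * (l ^ 2 * M ^ 2 / 2)) := by
          rw [Finset.prod_mul_distrib, Finset.prod_const, hP, Nat.cast_prod,
            ← Real.exp_nat_mul]
      _ ≤ (P : ℝ) * Real.exp (N * (l ^ 2 * M ^ 2 / 2)) := by
          refine mul_le_mul_of_nonneg_left (Real.exp_le_exp.2 ?_) (Nat.cast_nonneg P)
          have : (0:ℝ) ≤ l ^ 2 * M ^ 2 / 2 := by positivity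
          nlinarith
  -- combine
  have hes : 0 < Real.exp (l * s) := Real.exp_pos _
  have key : (((range P).filter (fun y => s ≤ ∑ p ∈ S, g p (y % p))).card : ℝ)
      ≤ (P : ℝ) * Real.exp (N * (l ^ 2 * M ^ 2 / 2)) / Real.exp (l * s) := by
    rw [le_div_iff₀ hes]
    exact markov.trans prodbd
  refine key.trans (le_of_eq ?_)
  rw [mul_div_assoc, ← Real.exp_sub]
  congr 1
  have hexp : N * (l ^ 2 * M ^ 2 / 2) - l * s = -(s ^ 2) / (2 * N * M ^ 2) := by
    rw [hl]
    field_simp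
    ring
  rw [hexp]

open scoped Classical in
lemma chernoff_count_complex (S : Finset ℕ) (hS : ∀ p ∈ S, p.Prime) (g : ℕ → ℕ → ℂ)
    (M N t : ℝ) (hM : 0 < M) (hN : 0 < N) (ht : 0 < t) (hn : (S.card : ℝ) ≤ N)
    (hb : ∀ p ∈ S, ∀ r ∈ range p, ‖g p r‖ ≤ M)
    (h0 : ∀ p ∈ S, ∑ r ∈ range p, g p r = 0) :
    (((range (∏ p ∈ S, p)).filter (fun y => t ≤ ‖∑ p ∈ S, g p (y % p)‖)).card : ℝ)
      ≤ 4 * (∏ p ∈ S, p : ℕ) * Real.exp (-((t / 2) ^ 2) / (2 * N * M ^ 2)) := by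
  set P : ℕ := ∏ p ∈ S, p with hP
  set s : ℝ := t / 2 with hs'
  have hs : 0 < s := by positivity
  -- the four real component functions
  set g₁ : ℕ → ℕ → ℝ := fun p r => (g p r).re with hg₁
  set g₂ : ℕ → ℕ → ℝ := fun p r => -(g p r).re with hg₂
  set g₃ : ℕ → ℕ → ℝ := fun p r => (g p r).im with hg₃
  set g₄ : ℕ → ℕ → ℝ := fun p r => -(g p r).im with hg₄
  have bound : ∀ gi : ℕ → ℕ → ℝ, (∀ p ∈ S, ∀ r ∈ range p, |gi p r| ≤ M) →
      (∀ p ∈ S, ∑ r ∈ range p, gi p r = 0) →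
      (((range P).filter (fun y => s ≤ ∑ p ∈ S, gi p (y % p))).card : ℝ)
        ≤ (P : ℝ) * Real.exp (-(s ^ 2) / (2 * N * M ^ 2)) :=
    fun gi hbi h0i => chernoff_count S hS gi M N s hM hN hs hn hbi h0i
  have sub : (range P).filter (fun y => t ≤ ‖∑ p ∈ S, g p (y % p)‖) ⊆
      ((range P).filter (fun y => s ≤ ∑ p ∈ S, g₁ p (y % p)) ∪
       (range P).filter (fun y => s ≤ ∑ p ∈ S, g₂ p (y % p))) ∪
      ((range P).filter (fun y => s ≤ ∑ p ∈ S, g₃ p (y % p)) ∪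
       (range P).filter (fun y => s ≤ ∑ p ∈ S, g₄ p (y % p))) := by
    intro y hy
    obtain ⟨hyr, hyt⟩ := Finset.mem_filter.1 hy
    set z : ℂ := ∑ p ∈ S, g p (y % p) with hz
    have hre : ∑ p ∈ S, g₁ p (y % p) = z.re := by
      rw [hz, Complex.re_sum]
    have him : ∑ p ∈ S, g₃ p (y % p) = z.im := by
      rw [hz, Complex.im_sum]
    have habs : t ≤ |z.re| + |z.im| := hyt.trans (Complex.norm_le_abs_re_add_abs_im z)
    have hcase : s ≤ |z.re| ∨ s ≤ |z.im| := by
      by_contra hcon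
      push_neg at hcon
      rw [hs'] at hcon
      linarith [hcon.1, hcon.2]
    simp only [Finset.mem_union, Finset.mem_filter]
    rcases hcase with hc | hc
    · rcases abs_le.1 (le_refl |z.re|) with _
      rcases le_or_gt 0 z.re with hsign | hsign
      · exact Or.inl (Or.inl ⟨hyr, by rw [hre]; rwa [abs_of_nonneg hsign] at hc⟩)
      · refine Or.inl (Or.inr ⟨hyr, ?_⟩)
        have : ∑ p ∈ S, g₂ p (y % p) = -z.re := by
          simp only [hg₂, Finset.sum_neg_distrib]
          rw [hre]
        rw [this]
        rwa [abs_of_neg hsign] at hc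
    · rcases le_or_gt 0 z.im with hsign | hsign
      · exact Or.inr (Or.inl ⟨hyr, by rw [him]; rwa [abs_of_nonneg hsign] at hc⟩)
      · refine Or.inr (Or.inr ⟨hyr, ?_⟩)
        have : ∑ p ∈ S, g₄ p (y % p) = -z.im := by
          simp only [hg₄, Finset.sum_neg_distrib]
          rw [him]
        rw [this]
        rwa [abs_of_neg hsign] at hc
  have hb₁ : ∀ p ∈ S, ∀ r ∈ range p, |g₁ p r| ≤ M := fun p hp r hr =>
    (Complex.abs_re_le_norm _).trans (hb p hp r hr)
  have hb₂ : ∀ p ∈ S, ∀ r ∈ range p, |g₂ p r| ≤ M := fun p hp r hr => by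
    rw [hg₂]; rw [abs_neg]; exact (Complex.abs_re_le_norm _).trans (hb p hp r hr)
  have hb₃ : ∀ p ∈ S, ∀ r ∈ range p, |g₃ p r| ≤ M := fun p hp r hr =>
    (Complex.abs_im_le_norm _).trans (hb p hp r hr)
  have hb₄ : ∀ p ∈ S, ∀ r ∈ range p, |g₄ p r| ≤ M := fun p hp r hr => by
    rw [hg₄]; rw [abs_neg]; exact (Complex.abs_im_le_norm _).trans (hb p hp r hr)
  have h0₁ : ∀ p ∈ S, ∑ r ∈ range p, g₁ p r = 0 := fun p hp => by
    rw [hg₁]; rw [← Complex.re_sum, h0 p hp]; rfl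
  have h0₂ : ∀ p ∈ S, ∑ r ∈ range p, g₂ p r = 0 := fun p hp => by
    simp only [hg₂, Finset.sum_neg_distrib]
    rw [← Complex.re_sum, h0 p hp]; simp
  have h0₃ : ∀ p ∈ S, ∑ r ∈ range p, g₃ p r = 0 := fun p hp => by
    rw [hg₃]; rw [← Complex.im_sum, h0 p hp]; rfl
  have h0₄ : ∀ p ∈ S, ∑ r ∈ range p, g₄ p r = 0 := fun p hp => by
    simp only [hg₄, Finset.sum_neg_distrib]
    rw [← Complex.im_sum, h0 p hp]; simp
  have hcard := Finset.card_le_card sub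
  have hchain : (((range P).filter (fun y => t ≤ ‖∑ p ∈ S, g p (y % p)‖)).card : ℝ)
      ≤ (((range P).filter (fun y => s ≤ ∑ p ∈ S, g₁ p (y % p))).card : ℝ)
        + ((range P).filter (fun y => s ≤ ∑ p ∈ S, g₂ p (y % p))).card
        + ((range P).filter (fun y => s ≤ ∑ p ∈ S, g₃ p (y % p))).card
        + ((range P).filter (fun y => s ≤ ∑ p ∈ S, g₄ p (y % p))).card := by
    have h1 := Finset.card_union_le
      ((range P).filter (fun y => s ≤ ∑ p ∈ S, g₁ p (y % p)) ∪
       (range P).filter (fun y => s ≤ ∑ p ∈ S, g₂ p (y % p)))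
      ((range P).filter (fun y => s ≤ ∑ p ∈ S, g₃ p (y % p)) ∪
       (range P).filter (fun y => s ≤ ∑ p ∈ S, g₄ p (y % p)))
    have h2 := Finset.card_union_le
      ((range P).filter (fun y => s ≤ ∑ p ∈ S, g₁ p (y % p)))
      ((range P).filter (fun y => s ≤ ∑ p ∈ S, g₂ p (y % p)))
    have h3 := Finset.card_union_le
      ((range P).filter (fun y => s ≤ ∑ p ∈ S, g₃ p (y % p)))
      ((range P).filter (fun y => s ≤ ∑ p ∈ S, g₄ p (y % p)))
    have hNat := hcard.trans (h1.trans (Nat.add_le_add h2 h3))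
    have : (#(filter (fun y => t ≤ ‖∑ p ∈ S, g p (y % p)‖) (range P)) : ℝ) ≤
        (#(filter (fun y => s ≤ ∑ p ∈ S, g₁ p (y % p)) (range P)) : ℝ) +
        #(filter (fun y => s ≤ ∑ p ∈ S, g₂ p (y % p)) (range P)) +
        (#(filter (fun y => s ≤ ∑ p ∈ S, g₃ p (y % p)) (range P)) +
        #(filter (fun y => s ≤ ∑ p ∈ S, g₄ p (y % p)) (range P))) := by exact_mod_cast hNat
    linarith
  calc (((range P).filter (fun y => t ≤ ‖∑ p ∈ S, g p (y % p)‖)).card : ℝ)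
      ≤ _ := hchain
    _ ≤ 4 * (P : ℝ) * Real.exp (-(s ^ 2) / (2 * N * M ^ 2)) := by
        have b1 := bound g₁ hb₁ h0₁
        have b2 := bound g₂ hb₂ h0₂
        have b3 := bound g₃ hb₃ h0₃
        have b4 := bound g₄ hb₄ h0₄
        linarith

lemma residue_count (d : ℤ) (hd : 0 < d) (H : ℕ) (ρ : ℤ) (T : Finset ℤ)
    (hT : T ⊆ Finset.Icc (1:ℤ) (H:ℤ)) :
    ((T.filter (fun j => j % d = ρ)).card : ℝ) ≤ (H : ℝ) / (d : ℝ) + 1 := by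
  have hsub : T.filter (fun j => j % d = ρ) ⊆
      (Finset.Icc (1:ℤ) (H:ℤ)).filter (fun j => j % d = ρ) :=
    Finset.filter_subset_filter _ hT
  have hinj : Set.InjOn (fun j => j / d)
      ((Finset.Icc (1:ℤ) (H:ℤ)).filter (fun j => j % d = ρ) : Finset ℤ) := by
    intro j₁ h₁ j₂ h₂ hEq
    simp only [Finset.coe_filter, Set.mem_setOf_eq, Finset.mem_Icc] at h₁ h₂
    have e₁ := Int.mul_ediv_add_emod j₁ d
    have e₂ := Int.mul_ediv_add_emod j₂ d
    simp only at hEq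
    rw [← e₁, ← e₂, hEq, h₁.2, h₂.2]
  have hmaps : ∀ j ∈ (Finset.Icc (1:ℤ) (H:ℤ)).filter (fun j => j % d = ρ),
      j / d ∈ Finset.Icc (0:ℤ) ((H:ℤ) / d) := by
    intro j hj
    obtain ⟨hj1, _⟩ := Finset.mem_filter.1 hj
    obtain ⟨ha1, ha2⟩ := Finset.mem_Icc.1 hj1
    refine Finset.mem_Icc.2 ⟨Int.ediv_nonneg (by linarith) hd.le, Int.ediv_le_ediv hd ha2⟩
  have hcard : ((Finset.Icc (1:ℤ) (H:ℤ)).filter (fun j => j % d = ρ)).card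
      ≤ (Finset.Icc (0:ℤ) ((H:ℤ) / d)).card :=
    Finset.card_le_card_of_injOn _ hmaps hinj
  have hIcc : (Finset.Icc (0:ℤ) ((H:ℤ) / d)).card = ((H:ℤ) / d + 1).toNat := by
    rw [Int.card_Icc]; norm_num
  have hdiv0 : (0:ℤ) ≤ (H:ℤ) / d := Int.ediv_nonneg (Int.natCast_nonneg H) hd.le
  have hdivle : (((H:ℤ) / d : ℤ) : ℝ) ≤ (H : ℝ) / (d : ℝ) := by
    rw [le_div_iff₀ (by exact_mod_cast hd : (0:ℝ) < (d:ℝ))]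
    have h := Int.ediv_mul_le (H:ℤ) hd.ne'
    calc (((H:ℤ) / d : ℤ) : ℝ) * (d : ℝ) = (((H:ℤ) / d * d : ℤ) : ℝ) := by push_cast; ring
      _ ≤ ((H:ℤ) : ℝ) := by exact_mod_cast h
      _ = (H : ℝ) := by push_cast; ring
  calc ((T.filter (fun j => j % d = ρ)).card : ℝ)
      ≤ (((Finset.Icc (1:ℤ) (H:ℤ)).filter (fun j => j % d = ρ)).card : ℝ) := by
        exact_mod_cast Finset.card_le_card hsub
    _ ≤ (((H:ℤ) / d + 1).toNat : ℝ) := by exact_mod_cast hcard.trans_eq hIcc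
    _ ≤ (H : ℝ) / (d : ℝ) + 1 := by
        have : ((((H:ℤ) / d + 1).toNat : ℤ) : ℝ) = (((H:ℤ) / d : ℤ) : ℝ) + 1 := by
          rw [Int.toNat_of_nonneg (by linarith)]; push_cast; ring
        rw [show ((((H:ℤ) / d + 1).toNat : ℕ) : ℝ) = ((((H:ℤ) / d + 1).toNat : ℤ) : ℝ) by push_cast; ring]
        rw [this]
        linarith [hdivle]

/-- The single-prime component of the bilinear form. -/
noncomputable def gAux (ε : ℝ) (H a : ℕ) (b h : ℤ) (c : ℕ → ℂ)
    (x₁ x₂ : ℤ → ℂ) (p r : ℕ) : ℂ :=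
  c p *
    ∑ j ∈ (Finset.Icc (1 : ℤ) (H : ℤ)).filter
        (fun j => 1 ≤ j + (p : ℤ) * h ∧ j + (p : ℤ) * h ≤ (H : ℤ)),
      (if ((a : ℤ) * (r : ℤ) + j) % ((a : ℤ) * (p : ℤ)) =
          ((p : ℤ) * b) % ((a : ℤ) * (p : ℤ)) then (1 : ℂ) else 0) * x₁ j * x₂ (j + (p : ℤ) * h)

lemma mediumPrimes_prime {ε : ℝ} {H p : ℕ} (hp : p ∈ mediumPrimes ε H) : p.Prime := by
  classical
  exact ((Finset.mem_filter.1 hp).2).1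

lemma gAux_mod (ε : ℝ) (H a : ℕ) (b h : ℤ) (c : ℕ → ℂ) (x₁ x₂ : ℤ → ℂ) (p : ℕ)
    (hp : 0 < p) (y : ℕ) :
    gAux ε H a b h c x₁ x₂ p (y % p) = gAux ε H a b h c x₁ x₂ p y := by
  unfold gAux
  congr 1
  refine Finset.sum_congr rfl fun j hj => ?_
  have key : ((a : ℤ) * ((y % p : ℕ) : ℤ) + j) % ((a : ℤ) * (p : ℤ)) =
      ((a : ℤ) * (y : ℤ) + j) % ((a : ℤ) * (p : ℤ)) := by
    have hy : (y : ℤ) = ((y % p : ℕ) : ℤ) + (p : ℤ) * ((y / p : ℕ) : ℤ) := by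
      exact_mod_cast (Nat.mod_add_div y p).symm
    have hdvd : ((a : ℤ) * (p : ℤ)) ∣ (((a : ℤ) * (y : ℤ) + j) - ((a : ℤ) * ((y % p : ℕ) : ℤ) + j)) :=
      ⟨((y / p : ℕ) : ℤ), by rw [hy]; ring⟩
    exact Int.ModEq.symm (Int.modEq_iff_dvd.2 (dvd_sub_comm.mp hdvd))
  rw [key]

lemma bilinearForm_eq_sum (ε : ℝ) (H a : ℕ) (b h : ℤ) (c : ℕ → ℂ) (x₁ x₂ : ℤ → ℂ) (y : ℕ) :
    bilinearForm ε H a b h c x₁ x₂ y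
      = ∑ p ∈ mediumPrimes ε H, gAux ε H a b h c x₁ x₂ p (y % p) := by
  unfold bilinearForm
  refine Finset.sum_congr rfl fun p hp => ?_
  rw [gAux_mod ε H a b h c x₁ x₂ p (mediumPrimes_prime hp).pos y]
  rfl

lemma bilinearForm_avg (ε : ℝ) (H a : ℕ) (b h : ℤ) (c : ℕ → ℂ) (x₁ x₂ : ℤ → ℂ) :
    (1 / (mediumPrimesProd ε H : ℂ)) *
        ∑ y' ∈ Finset.range (mediumPrimesProd ε H), bilinearForm ε H a b h c x₁ x₂ y'
      = ∑ p ∈ mediumPrimes ε H, ((p : ℂ)⁻¹ * ∑ r ∈ range p, gAux ε H a b h c x₁ x₂ p r) := by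
  classical
  set S := mediumPrimes ε H with hSdef
  have hS : ∀ p ∈ S, p.Prime := fun p hp => mediumPrimes_prime hp
  have hkey : ∀ p ∈ S, ∑ y' ∈ Finset.range (mediumPrimesProd ε H),
      gAux ε H a b h c x₁ x₂ p (y' % p)
      = (∑ r ∈ range p, gAux ε H a b h c x₁ x₂ p r) * ∏ q ∈ S.erase p, (q : ℂ) := by
    intro p hp
    have h1 : ∀ y' : ℕ, gAux ε H a b h c x₁ x₂ p (y' % p)
        = ∏ q ∈ S, (fun q r => if q = p then gAux ε H a b h c x₁ x₂ p r else 1) q (y' % q) := by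
      intro y'
      rw [Finset.prod_eq_single_of_mem p hp (fun q _ hq => if_neg hq)]
      simp
    have h2 := crt_sum_prod S hS (fun q r => if q = p then gAux ε H a b h c x₁ x₂ p r else 1)
    calc ∑ y' ∈ Finset.range (mediumPrimesProd ε H), gAux ε H a b h c x₁ x₂ p (y' % p)
        = ∑ y' ∈ Finset.range (∏ q ∈ S, q), ∏ q ∈ S,
            (fun q r => if q = p then gAux ε H a b h c x₁ x₂ p r else 1) q (y' % q) := by
          rw [show mediumPrimesProd ε H = ∏ q ∈ S, q from rfl]
          exact Finset.sum_congr rfl fun y' _ => h1 y'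
      _ = ∏ q ∈ S, ∑ r ∈ range q,
            (fun q r => if q = p then gAux ε H a b h c x₁ x₂ p r else 1) q r := h2
      _ = (∑ r ∈ range p, gAux ε H a b h c x₁ x₂ p r) * ∏ q ∈ S.erase p, (q : ℂ) := by
          rw [← Finset.mul_prod_erase S _ hp]
          simp only [if_pos rfl]
          congr 1
          refine Finset.prod_congr rfl fun q hq => ?_
          have hqp : q ≠ p := (Finset.mem_erase.1 hq).1
          simp [hqp]
  -- now expand
  have hform : ∀ y' : ℕ, bilinearForm ε H a b h c x₁ x₂ y'
      = ∑ p ∈ S, gAux ε H a b h c x₁ x₂ p (y' % p) :=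
    fun y' => bilinearForm_eq_sum ε H a b h c x₁ x₂ y'
  rw [Finset.sum_congr rfl fun y' _ => hform y', Finset.sum_comm]
  rw [Finset.mul_sum]
  refine Finset.sum_congr rfl fun p hp => ?_
  rw [hkey p hp]
  have hPfact : (mediumPrimesProd ε H : ℂ) = (p : ℂ) * ∏ q ∈ S.erase p, (q : ℂ) := by
    rw [show mediumPrimesProd ε H = ∏ q ∈ S, q from rfl]
    push_cast
    rw [← Finset.mul_prod_erase S _ hp]
  have hp0 : (p : ℂ) ≠ 0 := by
    exact_mod_cast (hS p hp).pos.ne'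
  have hE0 : (∏ q ∈ S.erase p, (q : ℂ)) ≠ 0 := by
    refine Finset.prod_ne_zero_iff.2 fun q hq => ?_
    exact_mod_cast (hS q (Finset.mem_of_mem_erase hq)).pos.ne'
  rw [hPfact]
  field_simp

lemma gAux_norm_le (ε : ℝ) (H a : ℕ) (b h : ℤ) (c : ℕ → ℂ) (x₁ x₂ : ℤ → ℂ) (p r : ℕ)
    (hε : 0 < ε) (hε1 : ε ≤ 1) (ha : 0 < a) (hp : 0 < p)
    (hplb : ε ^ 2 * H / 2 < (p : ℝ)) (hH : 0 < H)
    (hcp : ‖c p‖ = 1) (hx₁ : ∀ j : ℤ, ‖x₁ j‖ ≤ 1) (hx₂ : ∀ j : ℤ, ‖x₂ j‖ ≤ 1) :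
    ‖gAux ε H a b h c x₁ x₂ p r‖ ≤ 3 / ε ^ 2 := by
  classical
  set d : ℤ := (a : ℤ) * (p : ℤ) with hd
  have hd0 : (0:ℤ) < d := by positivity
  set J := (Finset.Icc (1 : ℤ) (H : ℤ)).filter
      (fun j => 1 ≤ j + (p : ℤ) * h ∧ j + (p : ℤ) * h ≤ (H : ℤ)) with hJ
  set C : ℤ → Prop := fun j => ((a : ℤ) * (r : ℤ) + j) % d = ((p : ℤ) * b) % d with hC
  have hnorm : ‖gAux ε H a b h c x₁ x₂ p r‖
      ≤ ∑ j ∈ J, (if C j then (1:ℝ) else 0) := by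
    unfold gAux
    rw [norm_mul, hcp, one_mul]
    refine (norm_sum_le _ _).trans (Finset.sum_le_sum fun j hj => ?_)
    by_cases hCj : C j
    · rw [if_pos hCj, if_pos hCj, one_mul]
      calc ‖x₁ j * x₂ (j + (p:ℤ) * h)‖ = ‖x₁ j‖ * ‖x₂ (j + (p:ℤ) * h)‖ := norm_mul _ _
        _ ≤ 1 * 1 := mul_le_mul (hx₁ j) (hx₂ _) (norm_nonneg _) zero_le_one
        _ = 1 := by norm_num
    · rw [if_neg hCj, if_neg hCj]
      simp
  have hcount : ∑ j ∈ J, (if C j then (1:ℝ) else 0) = ((J.filter C).card : ℝ) := by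
    rw [Finset.sum_boole]
  have hCiff : ∀ j : ℤ, C j ↔ j % d = ((p : ℤ) * b - (a : ℤ) * (r : ℤ)) % d := by
    intro j
    constructor
    · intro hj
      have h1 : ((a : ℤ) * (r : ℤ) + j) ≡ ((p : ℤ) * b) [ZMOD d] := hj
      have h2 := h1.sub (Int.ModEq.refl ((a : ℤ) * (r : ℤ)))
      have h3 : j ≡ ((p : ℤ) * b - (a : ℤ) * (r : ℤ)) [ZMOD d] := by
        simpa [add_sub_cancel_left] using h2
      exact h3
    · intro hj
      have h1 : j ≡ ((p : ℤ) * b - (a : ℤ) * (r : ℤ)) [ZMOD d] := hj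
      have h2 := (Int.ModEq.refl ((a : ℤ) * (r : ℤ))).add h1
      have h3 : ((a : ℤ) * (r : ℤ) + j) ≡ ((p : ℤ) * b) [ZMOD d] := by
        simpa [add_sub_cancel] using h2
      exact h3
  have hfilter : J.filter C = J.filter (fun j => j % d = ((p : ℤ) * b - (a : ℤ) * (r : ℤ)) % d) := by
    exact Finset.filter_congr fun j _ => by rw [hCiff j]
  have hcard : ((J.filter C).card : ℝ) ≤ (H : ℝ) / (d : ℝ) + 1 := by
    rw [hfilter]
    exact residue_count d hd0 H _ J (Finset.filter_subset _ _)
  have hdR : ((d : ℤ) : ℝ) = (a : ℝ) * (p : ℝ) := by rw [hd]; push_cast; ring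
  have hda : (H : ℝ) / ((d : ℤ) : ℝ) ≤ (H : ℝ) / (p : ℝ) := by
    rw [hdR]
    apply div_le_div_of_nonneg_left (by positivity) (by positivity)
    calc (p : ℝ) = 1 * p := (one_mul _).symm
      _ ≤ (a : ℝ) * p := by
          apply mul_le_mul_of_nonneg_right _ (by positivity)
          exact_mod_cast ha
  have hp2 : (H : ℝ) / (p : ℝ) ≤ 2 / ε ^ 2 := by
    rw [div_le_div_iff₀ (by exact_mod_cast hp) (by positivity)]
    nlinarith [hplb]
  have h1e : (1:ℝ) ≤ 1 / ε ^ 2 := by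
    rw [le_div_iff₀ (by positivity)]
    nlinarith
  calc ‖gAux ε H a b h c x₁ x₂ p r‖ ≤ ∑ j ∈ J, (if C j then (1:ℝ) else 0) := hnorm
    _ = ((J.filter C).card : ℝ) := hcount
    _ ≤ (H : ℝ) / ((d : ℤ) : ℝ) + 1 := hcard
    _ ≤ (H : ℝ) / (p : ℝ) + 1 := by linarith
    _ ≤ 2 / ε ^ 2 + 1 / ε ^ 2 := by linarith
    _ = 3 / ε ^ 2 := by ring

lemma mediumPrimes_prime' {ε : ℝ} {H p : ℕ} (hp : p ∈ mediumPrimes ε H) :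
    p.Prime ∧ ε ^ 2 * H / 2 < (p : ℝ) ∧ (p : ℝ) ≤ ε ^ 2 * H := by
  classical
  exact (Finset.mem_filter.1 hp).2

/-- Bound on the number of medium primes. -/
lemma mediumPrimes_card_le (ε : ℝ) (H : ℕ) (hε : 0 < ε) (hε1 : ε ≤ 1)
    (hH3 : 3 ≤ H) (hH4 : 4 / ε ^ 4 ≤ (H : ℝ)) :
    ((mediumPrimes ε H).card : ℝ) ≤ 4 * ε ^ 2 * H / Real.log H := by
  classical
  set S := mediumPrimes ε H with hSdef
  set n := S.card with hn
  have hHR : (3:ℝ) ≤ (H:ℝ) := by exact_mod_cast hH3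
  have hL0 : 0 < Real.log H := Real.log_pos (by linarith)
  have hεH : 0 < ε ^ 2 * H / 2 := by positivity
  -- lower bound on product
  have hlb : (ε ^ 2 * H / 2) ^ n ≤ ((mediumPrimesProd ε H : ℕ) : ℝ) := by
    rw [show mediumPrimesProd ε H = ∏ p ∈ S, p from rfl]
    push_cast
    rw [← Finset.prod_const]
    refine Finset.prod_le_prod (fun p _ => hεH.le) (fun p hp => (mediumPrimes_prime' hp).2.1.le)
  -- upper bound on product via primorial
  have hub : ((mediumPrimesProd ε H : ℕ) : ℝ) ≤ (4 : ℝ) ^ (⌊ε ^ 2 * (H:ℝ)⌋₊) := by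
    have hsub : S ⊆ (Finset.range (⌊ε ^ 2 * (H:ℝ)⌋₊ + 1)).filter Nat.Prime := by
      intro p hp
      obtain ⟨hpp, _, hple⟩ := mediumPrimes_prime' hp
      refine Finset.mem_filter.2 ⟨Finset.mem_range.2 ?_, hpp⟩
      exact Nat.lt_succ_of_le (Nat.le_floor hple)
    have h1 : mediumPrimesProd ε H ≤ primorial (⌊ε ^ 2 * (H:ℝ)⌋₊) := by
      rw [show mediumPrimesProd ε H = ∏ p ∈ S, p from rfl]
      unfold primorial
      refine Finset.prod_le_prod_of_subset_of_one_le' hsub ?_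
      intro p hp _
      exact ((Finset.mem_filter.1 hp).2).one_lt.le
    calc ((mediumPrimesProd ε H : ℕ) : ℝ) ≤ (primorial (⌊ε ^ 2 * (H:ℝ)⌋₊) : ℝ) := by
          exact_mod_cast h1
      _ ≤ ((4 ^ (⌊ε ^ 2 * (H:ℝ)⌋₊) : ℕ) : ℝ) := by exact_mod_cast primorial_le_4_pow _
      _ = (4 : ℝ) ^ (⌊ε ^ 2 * (H:ℝ)⌋₊) := by push_cast; ring
  -- logs
  have hPpos : (0:ℝ) < ((mediumPrimesProd ε H : ℕ) : ℝ) := lt_of_lt_of_le (by positivity) hlb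
  have hlog1 : (n : ℝ) * Real.log (ε ^ 2 * H / 2) ≤ Real.log ((mediumPrimesProd ε H : ℕ) : ℝ) := by
    rw [← Real.log_pow]
    exact Real.log_le_log (by positivity) hlb
  have hlog2 : Real.log ((mediumPrimesProd ε H : ℕ) : ℝ) ≤ (⌊ε ^ 2 * (H:ℝ)⌋₊ : ℝ) * Real.log 4 :=
    by
    rw [← Real.log_pow]
    exact Real.log_le_log hPpos hub
  have hlog4 : Real.log 4 ≤ 2 := by
    have h2 : (4:ℝ) ≤ Real.exp 2 := by
      have := Real.exp_one_gt_d9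
      have hsq : Real.exp 2 = Real.exp 1 * Real.exp 1 := by
        rw [← Real.exp_add]; norm_num
      nlinarith [Real.exp_one_gt_d9]
    calc Real.log 4 ≤ Real.log (Real.exp 2) := Real.log_le_log (by norm_num) h2
      _ = 2 := Real.log_exp 2
  have hfloor : (⌊ε ^ 2 * (H:ℝ)⌋₊ : ℝ) ≤ ε ^ 2 * H := Nat.floor_le (by positivity)
  -- sqrt comparison
  have hsqrt : Real.sqrt H ≤ ε ^ 2 * H / 2 := by
    rw [show ε ^ 2 * (H:ℝ) / 2 = Real.sqrt ((ε ^ 2 * H / 2) ^ 2) from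
      (Real.sqrt_sq (by positivity)).symm]
    apply Real.sqrt_le_sqrt
    have h4 : (4:ℝ) ≤ ε ^ 4 * H := by
      rw [div_le_iff₀ (by positivity)] at hH4; linarith
    have hH0 : (0:ℝ) ≤ (H:ℝ) := by positivity
    nlinarith [h4, hH0]
  have hloghalf : Real.log H / 2 ≤ Real.log (ε ^ 2 * H / 2) := by
    calc Real.log H / 2 = Real.log (Real.sqrt H) := (Real.log_sqrt (by positivity)).symm
      _ ≤ Real.log (ε ^ 2 * H / 2) := Real.log_le_log (Real.sqrt_pos.2 (by positivity)) hsqrt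
  -- combine
  have hchain : (n : ℝ) * (Real.log H / 2) ≤ ε ^ 2 * H * 2 := by
    calc (n : ℝ) * (Real.log H / 2) ≤ (n : ℝ) * Real.log (ε ^ 2 * H / 2) := by
          apply mul_le_mul_of_nonneg_left hloghalf (Nat.cast_nonneg n)
      _ ≤ Real.log ((mediumPrimesProd ε H : ℕ) : ℝ) := hlog1
      _ ≤ (⌊ε ^ 2 * (H:ℝ)⌋₊ : ℝ) * Real.log 4 := hlog2
      _ ≤ (ε ^ 2 * H) * 2 := by
          apply mul_le_mul hfloor hlog4 (Real.log_nonneg (by norm_num)) (by positivity)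
  rw [le_div_iff₀ hL0]
  nlinarith [hchain]

open scoped Classical in
theorem bilinear_form_concentration :
    ∃ ε₀ : ℝ, 0 < ε₀ ∧ ∀ ε : ℝ, 0 < ε → ε < ε₀ →
      ∀ a : ℕ, 0 < a → ∀ b h : ℤ, h ≠ 0 →
      ∃ H₀ : ℕ, ∀ H : ℕ, H₀ ≤ H →
      ∀ c : ℕ → ℂ, (∀ p ∈ mediumPrimes ε H, ‖c p‖ = 1) →
      ∀ x₁ x₂ : ℤ → ℂ, (∀ j : ℤ, ‖x₁ j‖ ≤ 1) → (∀ j : ℤ, ‖x₂ j‖ ≤ 1) →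
        (((Finset.range (mediumPrimesProd ε H)).filter (fun y =>
            ε ^ 2 * H / Real.log H ≤
              ‖bilinearForm ε H a b h c x₁ x₂ y -
                (1 / (mediumPrimesProd ε H : ℂ)) *
                  ∑ y' ∈ Finset.range (mediumPrimesProd ε H),
                    bilinearForm ε H a b h c x₁ x₂ y'‖)).card : ℝ)
          ≤ Real.exp (-(ε ^ 7) * H / Real.log H) * mediumPrimesProd ε H := by
  refine ⟨1/2304, by norm_num, fun ε hε hε' a ha b h hh => ?_⟩
  refine ⟨max 3 ⌈max (4/ε^4) ((9216/ε^6)^2)⌉₊, fun H hH c hc x₁ x₂ hx₁ hx₂ => ?_⟩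
  classical
  have hε1 : ε ≤ 1 := by linarith
  have hH3 : 3 ≤ H := le_trans (le_max_left _ _) hH
  have hHR : (3:ℝ) ≤ (H:ℝ) := by exact_mod_cast hH3
  have hH0 : 0 < H := by omega
  have hceil : max (4/ε^4) ((9216/ε^6)^2) ≤ (H:ℝ) := by
    have h1 : ⌈max (4/ε^4) ((9216/ε^6)^2)⌉₊ ≤ H := le_trans (le_max_right _ _) hH
    calc max (4/ε^4) ((9216/ε^6)^2) ≤ (⌈max (4/ε^4) ((9216/ε^6)^2)⌉₊ : ℝ) := Nat.le_ceil _
      _ ≤ (H:ℝ) := by exact_mod_cast h1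
  have hH4 : 4/ε^4 ≤ (H:ℝ) := le_trans (le_max_left _ _) hceil
  have hH9 : (9216/ε^6)^2 ≤ (H:ℝ) := le_trans (le_max_right _ _) hceil
  have hL0 : 0 < Real.log H := Real.log_pos (by linarith)
  set L : ℝ := Real.log H with hLdef
  set S := mediumPrimes ε H with hSdef
  set P := mediumPrimesProd ε H with hPdef
  have hS : ∀ p ∈ S, p.Prime := fun p hp => (mediumPrimes_prime' hp).1
  set t : ℝ := ε ^ 2 * H / L with htdef
  set M : ℝ := 6/ε^2 with hMdef
  set N : ℝ := 4*ε^2*H/L with hNdef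
  have ht : 0 < t := by rw [htdef]; positivity
  have hM : 0 < M := by rw [hMdef]; positivity
  have hN : 0 < N := by rw [hNdef]; positivity
  have hn : (S.card : ℝ) ≤ N := mediumPrimes_card_le ε H hε hε1 hH3 hH4
  set g : ℕ → ℕ → ℂ := fun p r => gAux ε H a b h c x₁ x₂ p r with hgdef
  set mm : ℕ → ℂ := fun p => (p:ℂ)⁻¹ * ∑ r ∈ range p, g p r with hmmdef
  set gc : ℕ → ℕ → ℂ := fun p r => g p r - mm p with hgcdef
  have hgb : ∀ p ∈ S, ∀ r : ℕ, ‖g p r‖ ≤ 3/ε^2 := fun p hp r =>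
    gAux_norm_le ε H a b h c x₁ x₂ p r hε hε1 ha (hS p hp).pos
      (mediumPrimes_prime' hp).2.1 hH0 (hc p hp) hx₁ hx₂
  have hmb : ∀ p ∈ S, ‖mm p‖ ≤ 3/ε^2 := by
    intro p hp
    have hp0 : 0 < p := (hS p hp).pos
    have h1 : ‖∑ r ∈ range p, g p r‖ ≤ (p : ℝ) * (3/ε^2) := by
      refine (norm_sum_le _ _).trans ?_
      calc ∑ r ∈ range p, ‖g p r‖ ≤ ∑ _r ∈ range p, (3/ε^2) :=
            Finset.sum_le_sum fun r _ => hgb p hp r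
        _ = (p : ℝ) * (3/ε^2) := by rw [Finset.sum_const, Finset.card_range, nsmul_eq_mul]
    calc ‖mm p‖ = ‖(p:ℂ)⁻¹‖ * ‖∑ r ∈ range p, g p r‖ := norm_mul _ _
      _ ≤ (p:ℝ)⁻¹ * ((p : ℝ) * (3/ε^2)) := by
          refine mul_le_mul ?_ h1 (norm_nonneg _) (by positivity)
          rw [norm_inv, Complex.norm_natCast]
      _ = 3/ε^2 := by
          field_simp
  have hgcb : ∀ p ∈ S, ∀ r ∈ range p, ‖gc p r‖ ≤ M := by
    intro p hp r _
    calc ‖gc p r‖ = ‖g p r - mm p‖ := rfl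
      _ ≤ ‖g p r‖ + ‖mm p‖ := norm_sub_le _ _
      _ ≤ 3/ε^2 + 3/ε^2 := add_le_add (hgb p hp r) (hmb p hp)
      _ = M := by rw [hMdef]; ring
  have hcent : ∀ p ∈ S, ∑ r ∈ range p, gc p r = 0 := by
    intro p hp
    have hp0 : (p:ℂ) ≠ 0 := by exact_mod_cast (hS p hp).pos.ne'
    rw [hgcdef]
    simp only [Finset.sum_sub_distrib, Finset.sum_const, Finset.card_range, nsmul_eq_mul, hmmdef]
    field_simp
    simp
  have hpt : ∀ y : ℕ, bilinearForm ε H a b h c x₁ x₂ y -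
      (1 / (P : ℂ)) * ∑ y' ∈ Finset.range P, bilinearForm ε H a b h c x₁ x₂ y'
      = ∑ p ∈ S, gc p (y % p) := by
    intro y
    rw [hPdef, bilinearForm_eq_sum, bilinearForm_avg, ← Finset.sum_sub_distrib]
  have hfilter_eq : (Finset.range P).filter (fun y => t ≤
        ‖bilinearForm ε H a b h c x₁ x₂ y -
          (1 / (P : ℂ)) * ∑ y' ∈ Finset.range P, bilinearForm ε H a b h c x₁ x₂ y'‖)
      = (Finset.range P).filter (fun y => t ≤ ‖∑ p ∈ S, gc p (y % p)‖) :=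
    Finset.filter_congr fun y _ => by rw [hpt y]
  have hmain := chernoff_count_complex S hS gc M N t hM hN ht hn hgcb hcent
  rw [show (∏ p ∈ S, p) = P from rfl] at hmain
  -- numeric endgame
  have hexp_eq : -((t/2)^2) / (2*N*M^2) = -(ε^6 * H / (1152 * L)) := by
    rw [htdef, hNdef, hMdef]
    have hL : L ≠ 0 := hL0.ne'
    have hεne : ε ≠ 0 := hε.ne'
    have hHne : (H:ℝ) ≠ 0 := by positivity
    field_simp
    ring
  have hsqrtpos : 0 < Real.sqrt H := Real.sqrt_pos.2 (by positivity)
  have hLsqrt : L ≤ 2 * Real.sqrt H := by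
    rw [hLdef]
    calc Real.log H = 2 * Real.log (Real.sqrt H) := by
          rw [Real.log_sqrt (by positivity)]; ring
      _ ≤ 2 * (Real.sqrt H - 1) := by
          have := Real.log_le_sub_one_of_pos hsqrtpos
          linarith
      _ ≤ 2 * Real.sqrt H := by linarith
  have hsqrtH : 9216/ε^6 ≤ Real.sqrt H := by
    calc (9216:ℝ)/ε^6 = Real.sqrt ((9216/ε^6)^2) := (Real.sqrt_sq (by positivity)).symm
      _ ≤ Real.sqrt H := Real.sqrt_le_sqrt hH9
  have hHL : 4608/ε^6 ≤ (H:ℝ)/L := by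
    have h3 : Real.sqrt H / 2 ≤ (H:ℝ)/L := by
      rw [div_le_div_iff₀ (by norm_num) hL0]
      calc Real.sqrt H * L ≤ Real.sqrt H * (2 * Real.sqrt H) :=
            mul_le_mul_of_nonneg_left hLsqrt (Real.sqrt_nonneg _)
        _ = 2 * (Real.sqrt H * Real.sqrt H) := by ring
        _ = 2 * (H:ℝ) := by rw [Real.mul_self_sqrt (by positivity)]
        _ = (H:ℝ) * 2 := by ring
    calc (4608:ℝ)/ε^6 = (9216/ε^6)/2 := by ring
      _ ≤ Real.sqrt H / 2 := by linarith
      _ ≤ (H:ℝ)/L := h3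
  have hlog4 : Real.log 4 ≤ 2 := by
    have h2 : (4:ℝ) ≤ Real.exp 2 := by
      have hsq : Real.exp 2 = Real.exp 1 * Real.exp 1 := by
        rw [← Real.exp_add]; norm_num
      nlinarith [Real.exp_one_gt_d9]
    calc Real.log 4 ≤ Real.log (Real.exp 2) := Real.log_le_log (by norm_num) h2
      _ = 2 := Real.log_exp 2
  have hfinal : 4 * Real.exp (-((t/2)^2) / (2*N*M^2)) ≤ Real.exp (-(ε ^ 7) * H / L) := by
    rw [hexp_eq]
    rw [show (4:ℝ) = Real.exp (Real.log 4) from (Real.exp_log (by norm_num)).symm, ← Real.exp_add]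
    apply Real.exp_le_exp.2
    have hQ : 0 ≤ (H:ℝ)/L := by positivity
    have hε7 : ε^7 ≤ ε^6/2304 := by
      have h6 : (0:ℝ) ≤ ε^6 := by positivity
      calc ε^7 = ε * ε^6 := by ring
        _ ≤ (1/2304) * ε^6 := mul_le_mul_of_nonneg_right hε'.le h6
        _ = ε^6/2304 := by ring
    have e1 : ε^6 * H / (1152 * L) = (ε^6/1152) * ((H:ℝ)/L) :=
      (div_mul_div_comm (ε^6) (1152:ℝ) ((H:ℝ)) L).symm
    have e2 : -(ε ^ 7) * H / L = -(ε^7 * ((H:ℝ)/L)) := by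
      rw [neg_mul, neg_div, mul_div_assoc]
    have e3 : (ε^6/2304) * ((H:ℝ)/L) ≥ 2 := by
      calc (ε^6/2304) * ((H:ℝ)/L) ≥ (ε^6/2304) * (4608/ε^6) := by
            apply mul_le_mul_of_nonneg_left hHL (by positivity)
        _ = 2 := by field_simp; ring
    rw [e1, e2]
    have e4 : ε^7 * ((H:ℝ)/L) ≤ (ε^6/2304) * ((H:ℝ)/L) :=
      mul_le_mul_of_nonneg_right (by linarith) hQ
    have e5 : (ε^6/1152)*((H:ℝ)/L) = 2*((ε^6/2304)*((H:ℝ)/L)) := by ring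
    linarith [hlog4, e3, e4, e5]
  -- conclude
  rw [hfilter_eq]
  calc ((((Finset.range P).filter (fun y => t ≤ ‖∑ p ∈ S, gc p (y % p)‖)).card : ℝ))
      ≤ 4 * (P:ℝ) * Real.exp (-((t/2)^2) / (2*N*M^2)) := hmain
    _ = (P:ℝ) * (4 * Real.exp (-((t/2)^2) / (2*N*M^2))) := by ring
    _ ≤ (P:ℝ) * Real.exp (-(ε ^ 7) * H / L) :=
        mul_le_mul_of_nonneg_left hfinal (Nat.cast_nonneg P)
    _ = Real.exp (-(ε ^ 7) * H / L) * P := by ring
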